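/- The Cerruti coordinate sequences μₙ⁰, μₙ¹, μₙ² each satisfy the linear recurrence sₙ₊₃ = Tr(N)·sₙ₊₂ - I₁(N)·sₙ₊₁ + det(N)·sₙ, where Tr(N) = p²+2q+3z, I₁(N) = q²-2pr+2p²z+4qz+3z², and det(N) = r²+q²z-2prz+p²z²+2qz²+z³. -/

import Mathlib

open Polynomial in
theorem cerruti_recurrence (p q r z : ℚ)
    (hf : Irreducible (X^3 - C p * X^2 - C q * X - C r : ℚ[X]))
    (μ0 μ1 μ2 : ℕ → ℚ)
    (hμ : ∀ n : ℕ,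
      (algebraMap ℚ (AdjoinRoot (X^3 - C p * X^2 - C q * X - C r : ℚ[X])) z
          + (AdjoinRoot.root (X^3 - C p * X^2 - C q * X - C r : ℚ[X]))^2)^n
        = algebraMap ℚ _ (μ0 n)
          + algebraMap ℚ _ (μ1 n) * AdjoinRoot.root (X^3 - C p * X^2 - C q * X - C r : ℚ[X])
          + algebraMap ℚ _ (μ2 n) * (AdjoinRoot.root (X^3 - C p * X^2 - C q * X - C r : ℚ[X]))^2) :
    ∀ n : ℕ, ∀ s ∈ ({μ0, μ1, μ2} : Set (ℕ → ℚ)),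
      s (n+3) = (p^2 + 2*q + 3*z) * s (n+2)
        - (q^2 - 2*p*r + 2*p^2*z + 4*q*z + 3*z^2) * s (n+1)
        + (r^2 + q^2*z - 2*p*r*z + p^2*z^2 + 2*q*z^2 + z^3) * s n := by
  set f : ℚ[X] := X^3 - C p * X^2 - C q * X - C r with hfdef
  set K := AdjoinRoot f
  set α : K := AdjoinRoot.root f with hα
  set φ : ℚ →+* K := algebraMap ℚ K with hφ
  have hdeg : f.natDegree = 3 := by
    rw [hfdef]; compute_degree!
  -- the root relation
  have h3 : α ^ 3 = φ p * α ^ 2 + φ q * α + φ r := by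
    have h0 : AdjoinRoot.mk f (X^3 - C p * X^2 - C q * X - C r) = 0 := by
      rw [← hfdef]; exact AdjoinRoot.mk_self
    simp only [map_sub, map_mul, map_pow, AdjoinRoot.mk_X, AdjoinRoot.mk_C] at h0
    rw [hα, hφ, AdjoinRoot.algebraMap_eq]
    linear_combination h0
  -- uniqueness of coordinates
  have key : ∀ a b c : ℚ, φ a + φ b * α + φ c * α ^ 2 = 0 →
      a = 0 ∧ b = 0 ∧ c = 0 := by
    intro a b c h
    have h2 : AdjoinRoot.mk f (C a + C b * X + C c * X ^ 2) = 0 := by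
      rw [hφ, hα, AdjoinRoot.algebraMap_eq] at h
      simpa [map_add, map_mul, map_pow, AdjoinRoot.mk_X, AdjoinRoot.algebraMap_eq] using h
    rw [AdjoinRoot.mk_eq_zero] at h2
    have hlt : (C a + C b * X + C c * X ^ 2 : ℚ[X]).natDegree < f.natDegree := by
      rw [hdeg]
      have : (C a + C b * X + C c * X ^ 2 : ℚ[X]).natDegree ≤ 2 := by compute_degree
      omega
    have hz : (C a + C b * X + C c * X ^ 2 : ℚ[X]) = 0 :=
      Polynomial.eq_zero_of_dvd_of_natDegree_lt h2 hlt
    refine ⟨?_, ?_, ?_⟩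
    · have := congrArg (fun g => Polynomial.coeff g 0) hz; simpa using this
    · have := congrArg (fun g => Polynomial.coeff g 1) hz; simpa using this
    · have := congrArg (fun g => Polynomial.coeff g 2) hz; simpa using this
  set β : K := φ z + α ^ 2 with hβ
  -- characteristic cubic for β
  have hcubic : β ^ 3 = (φ p ^ 2 + 2 * φ q + 3 * φ z) * β ^ 2
      - (φ q ^ 2 - 2 * φ p * φ r + 2 * φ p ^ 2 * φ z + 4 * φ q * φ z + 3 * φ z ^ 2) * β
      + (φ r ^ 2 + φ q ^ 2 * φ z - 2 * φ p * φ r * φ z + φ p ^ 2 * φ z ^ 2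
          + 2 * φ q * φ z ^ 2 + φ z ^ 3) := by
    rw [hβ]
    linear_combination (α ^ 3 + φ p * α ^ 2 - φ q * α + φ r) * h3
  intro n s hs
  have hpow : β ^ (n + 3) = (φ p ^ 2 + 2 * φ q + 3 * φ z) * β ^ (n + 2)
      - (φ q ^ 2 - 2 * φ p * φ r + 2 * φ p ^ 2 * φ z + 4 * φ q * φ z + 3 * φ z ^ 2) * β ^ (n + 1)
      + (φ r ^ 2 + φ q ^ 2 * φ z - 2 * φ p * φ r * φ z + φ p ^ 2 * φ z ^ 2
          + 2 * φ q * φ z ^ 2 + φ z ^ 3) * β ^ n := by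
    have e1 : β ^ (n + 3) = β ^ n * β ^ 3 := by ring
    have e2 : β ^ (n + 2) = β ^ n * β ^ 2 := by ring
    have e3 : β ^ (n + 1) = β ^ n * β ^ 1 := by ring
    rw [e1, e2, e3, hcubic]; ring
  -- translate hμ to our notation
  have hμ' : ∀ m : ℕ, β ^ m = φ (μ0 m) + φ (μ1 m) * α + φ (μ2 m) * α ^ 2 := fun m => hμ m
  have H : ∀ i : Fin 3,
      (![μ0, μ1, μ2] i) (n+3)
        - ((p^2 + 2*q + 3*z) * (![μ0, μ1, μ2] i) (n+2)
          - (q^2 - 2*p*r + 2*p^2*z + 4*q*z + 3*z^2) * (![μ0, μ1, μ2] i) (n+1)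
          + (r^2 + q^2*z - 2*p*r*z + p^2*z^2 + 2*q*z^2 + z^3) * (![μ0, μ1, μ2] i) n) = 0 := by
    have hkey := key
      (μ0 (n+3) - ((p^2 + 2*q + 3*z) * μ0 (n+2)
          - (q^2 - 2*p*r + 2*p^2*z + 4*q*z + 3*z^2) * μ0 (n+1)
          + (r^2 + q^2*z - 2*p*r*z + p^2*z^2 + 2*q*z^2 + z^3) * μ0 n))
      (μ1 (n+3) - ((p^2 + 2*q + 3*z) * μ1 (n+2)
          - (q^2 - 2*p*r + 2*p^2*z + 4*q*z + 3*z^2) * μ1 (n+1)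
          + (r^2 + q^2*z - 2*p*r*z + p^2*z^2 + 2*q*z^2 + z^3) * μ1 n))
      (μ2 (n+3) - ((p^2 + 2*q + 3*z) * μ2 (n+2)
          - (q^2 - 2*p*r + 2*p^2*z + 4*q*z + 3*z^2) * μ2 (n+1)
          + (r^2 + q^2*z - 2*p*r*z + p^2*z^2 + 2*q*z^2 + z^3) * μ2 n))
      (by
        simp only [map_sub, map_add, map_mul, map_pow, map_ofNat]
        linear_combination (-1 : K) * hμ' (n+3) + (φ p ^ 2 + 2 * φ q + 3 * φ z) * hμ' (n+2)
          - (φ q ^ 2 - 2 * φ p * φ r + 2 * φ p ^ 2 * φ z + 4 * φ q * φ z + 3 * φ z ^ 2) * hμ' (n+1)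
          + (φ r ^ 2 + φ q ^ 2 * φ z - 2 * φ p * φ r * φ z + φ p ^ 2 * φ z ^ 2
              + 2 * φ q * φ z ^ 2 + φ z ^ 3) * hμ' n + hpow)
    intro i
    fin_cases i
    · exact hkey.1
    · exact hkey.2.1
    · exact hkey.2.2
  rcases hs with h | h | h
  · have := H 0; simp only [Matrix.cons_val_zero] at this; rw [h]; linarith
  · have := H 1; simp only [Matrix.cons_val_one, Matrix.head_cons, Matrix.cons_val_zero] at this; rw [h]; linarith
  · have := H 2; simp only [Matrix.cons_val_two, Matrix.tail_cons, Matrix.head_cons] at this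
    rw [h]; linarith
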